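/- (Wedin-type pseudoinverse perturbation) If A and B = A + E are complex matrices of the same size with rank(A) = rank(B), then \|B^\dagger - A^\dagger\|_2 \le ((1+\sqrt{5})/2) \|B^\dagger\|_2 \|A^\dagger\|_2 \|E\|_2. -/

import Mathlib

open scoped Real BigOperators
open Matrix

/-- The spectral (operator) norm of a complex matrix. -/
noncomputable def sNorm {m n : ℕ} (A : Matrix (Fin m) (Fin n) ℂ) : ℝ :=
  ‖LinearMap.toContinuousLinearMap (Matrix.toEuclideanLin A)‖

/-- The singular values of a complex matrix, in decreasing order:
`svals A j` is the `(j+1)`-st largest singular value, obtained by sorting the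
square roots of the eigenvalues of `Aᴴ * A` in decreasing order. -/
noncomputable def svals {m n : ℕ} (A : Matrix (Fin m) (Fin n) ℂ) : Fin n → ℝ :=
  fun j =>
    Real.sqrt ((Matrix.isHermitian_conjTranspose_mul_self A).eigenvalues
      (Tuple.sort (Matrix.isHermitian_conjTranspose_mul_self A).eigenvalues j.rev))

/-- The four Penrose conditions characterizing the Moore-Penrose pseudoinverse. -/
def IsMoorePenrose {m n : ℕ} (A : Matrix (Fin m) (Fin n) ℂ) (P : Matrix (Fin n) (Fin m) ℂ) : Prop :=
  A * P * A = A ∧ P * A * P = P ∧ (A * P)ᴴ = A * P ∧ (P * A)ᴴ = P * A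

namespace WedinAux

open scoped Matrix.Norms.L2Operator InnerProductSpace
open Matrix LinearMap

variable {k l m n : ℕ}

/-- action of a matrix on Euclidean space -/
noncomputable def ev {m n : ℕ} (M : Matrix (Fin m) (Fin n) ℂ) (x : EuclideanSpace ℂ (Fin n)) :
    EuclideanSpace ℂ (Fin m) := Matrix.toEuclideanLin M x

lemma sNorm_eq_norm (A : Matrix (Fin m) (Fin n) ℂ) : sNorm A = ‖A‖ := rfl

lemma ev_mul (M : Matrix (Fin m) (Fin n) ℂ) (N : Matrix (Fin n) (Fin k) ℂ) (x) :
    ev (M * N) x = ev M (ev N x) := by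
  simp [ev, Matrix.toEuclideanLin_apply, Matrix.mulVec_mulVec]

lemma ev_one (x : EuclideanSpace ℂ (Fin n)) : ev (1 : Matrix (Fin n) (Fin n) ℂ) x = x := by
  simp [ev, Matrix.toEuclideanLin_apply, Matrix.one_mulVec]

lemma ev_zero (x : EuclideanSpace ℂ (Fin n)) : ev (0 : Matrix (Fin m) (Fin n) ℂ) x = 0 := by
  simp [ev]

lemma ev_sub (M N : Matrix (Fin m) (Fin n) ℂ) (x) : ev (M - N) x = ev M x - ev N x := by
  simp [ev]

lemma ev_sub_arg (M : Matrix (Fin m) (Fin n) ℂ) (x y) : ev M (x - y) = ev M x - ev M y := by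
  simp [ev]

lemma ev_add_arg (M : Matrix (Fin m) (Fin n) ℂ) (x y) : ev M (x + y) = ev M x + ev M y := by
  simp [ev]

lemma norm_ev_le (M : Matrix (Fin m) (Fin n) ℂ) (x) : ‖ev M x‖ ≤ ‖M‖ * ‖x‖ :=
  Matrix.toEuclideanLin (n := Fin n) (m := Fin m) (𝕜 := ℂ) |>.trans
    LinearMap.toContinuousLinearMap M |>.le_opNorm x

lemma sNorm_le_bound (M : Matrix (Fin m) (Fin n) ℂ) (c : ℝ) (hc : 0 ≤ c)
    (h : ∀ x, ‖ev M x‖ ≤ c * ‖x‖) : ‖M‖ ≤ c := by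
  rw [Matrix.l2_opNorm_def]
  exact ContinuousLinearMap.opNorm_le_bound _ hc h

lemma inner_ev (M : Matrix (Fin m) (Fin n) ℂ) (x y) :
    ⟪ev M x, y⟫_ℂ = ⟪x, ev Mᴴ y⟫_ℂ := by
  rw [ev, ev, Matrix.toEuclideanLin_conjTranspose_eq_adjoint]
  exact (LinearMap.adjoint_inner_right _ x y).symm

lemma sq_le_imp {a b : ℝ} (ha : 0 ≤ a) (hb : 0 ≤ b) (h : a ^ 2 ≤ b ^ 2) : a ≤ b := by
  nlinarith

section Proj

variable {k : ℕ} {R : Matrix (Fin k) (Fin k) ℂ} (hh : Rᴴ = R) (hi : R * R = R)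
include hh hi

lemma inner_proj_compl (x y : EuclideanSpace ℂ (Fin k)) :
    ⟪ev R x, y - ev R y⟫_ℂ = 0 := by
  rw [inner_ev, hh, ev_sub_arg, ← ev_mul, hi, sub_self, inner_zero_right]

lemma proj_pyth (x : EuclideanSpace ℂ (Fin k)) :
    ‖x‖ ^ 2 = ‖ev R x‖ ^ 2 + ‖x - ev R x‖ ^ 2 := by
  have hx : x = ev R x + (x - ev R x) := by abel
  have h0 : ⟪ev R x, x - ev R x⟫_ℂ = 0 := inner_proj_compl hh hi x x
  calc ‖x‖ ^ 2 = ‖ev R x + (x - ev R x)‖ ^ 2 := by rw [← hx]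
    _ = ‖ev R x‖ ^ 2 + 2 * Complex.re ⟪ev R x, x - ev R x⟫_ℂ + ‖x - ev R x‖ ^ 2 :=
        norm_add_sq (𝕜 := ℂ) _ _
    _ = ‖ev R x‖ ^ 2 + ‖x - ev R x‖ ^ 2 := by rw [h0]; simp

lemma proj_contract (x : EuclideanSpace ℂ (Fin k)) : ‖ev R x‖ ≤ ‖x‖ := by
  have := proj_pyth hh hi x
  refine sq_le_imp (norm_nonneg _) (norm_nonneg _) ?_
  nlinarith [sq_nonneg ‖x - ev R x‖]

lemma norm_proj_mul_le (M : Matrix (Fin k) (Fin l) ℂ) : ‖R * M‖ ≤ ‖M‖ := by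
  refine sNorm_le_bound _ _ (norm_nonneg M) fun x => ?_
  rw [ev_mul]
  exact (proj_contract hh hi _).trans (norm_ev_le M x)

end Proj

lemma rank_eq_finrank_range_ev (M : Matrix (Fin m) (Fin n) ℂ) :
    M.rank = Module.finrank ℂ (LinearMap.range (Matrix.toEuclideanLin M)) := by
  rw [Matrix.toEuclideanLin_eq_toLin]
  exact Matrix.rank_eq_finrank_range_toLin M (PiLp.basisFun 2 ℂ (Fin m))
    (PiLp.basisFun 2 ℂ (Fin n))

section SinTheta

variable {k : ℕ} {P₁ P₂ : Matrix (Fin k) (Fin k) ℂ}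

lemma range_fix (i₁ : P₁ * P₁ = P₁) :
    ∀ v ∈ LinearMap.range (Matrix.toEuclideanLin P₁), ev P₁ v = v := by
  rintro _ ⟨y, rfl⟩
  show ev P₁ (ev P₁ y) = ev P₁ y
  rw [← ev_mul, i₁]

set_option maxHeartbeats 2000000 in
lemma sin_theta (h₁ : P₁ᴴ = P₁) (i₁ : P₁ * P₁ = P₁) (h₂ : P₂ᴴ = P₂) (i₂ : P₂ * P₂ = P₂)
    (hr : P₁.rank = P₂.rank) :
    ‖(1 - P₁) * P₂‖ ≤ ‖(1 - P₂) * P₁‖ := by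
  set c := ‖(1 - P₂) * P₁‖ with hcdef
  have hc0 : 0 ≤ c := norm_nonneg _
  have h₁' : (1 - P₁)ᴴ = 1 - P₁ := by
    rw [conjTranspose_sub, conjTranspose_one, h₁]
  have i₁' : (1 - P₁) * (1 - P₁) = 1 - P₁ := by
    simp [sub_mul, mul_sub, i₁]
  have h₂' : (1 - P₂)ᴴ = 1 - P₂ := by
    rw [conjTranspose_sub, conjTranspose_one, h₂]
  have i₂' : (1 - P₂) * (1 - P₂) = 1 - P₂ := by
    simp [sub_mul, mul_sub, i₂]
  rcases le_or_gt 1 c with h1c | h1c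
  · refine le_trans ?_ h1c
    refine sNorm_le_bound _ _ zero_le_one fun x => ?_
    rw [ev_mul, one_mul]
    exact (proj_contract h₁' i₁' _).trans (proj_contract h₂ i₂ x)
  · set V₁ := LinearMap.range (Matrix.toEuclideanLin P₁) with hV₁
    set V₂ := LinearMap.range (Matrix.toEuclideanLin P₂) with hV₂
    have key1 : ∀ v ∈ V₁, ‖v - ev P₂ v‖ ≤ c * ‖v‖ := by
      intro v hv
      have hid : v - ev P₂ v = ev ((1 - P₂) * P₁) v := by
        rw [ev_mul, range_fix i₁ v hv, ev_sub, ev_one]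
      rw [hid]; exact norm_ev_le _ _
    set T : V₁ →ₗ[ℂ] EuclideanSpace ℂ (Fin k) :=
      (Matrix.toEuclideanLin P₂).comp V₁.subtype with hT
    have hker : LinearMap.ker T = ⊥ := by
      rw [LinearMap.ker_eq_bot']
      intro v hv
      have h1 : ‖(v : EuclideanSpace ℂ (Fin k))‖ ≤ c * ‖(v : EuclideanSpace ℂ (Fin k))‖ := by
        have h2 := key1 (v : EuclideanSpace ℂ (Fin k)) v.2
        have h3 : ev P₂ (v : EuclideanSpace ℂ (Fin k)) = 0 := hv
        rw [h3, sub_zero] at h2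
        exact h2
      have h4 : ‖(v : EuclideanSpace ℂ (Fin k))‖ = 0 := by nlinarith [norm_nonneg (v : EuclideanSpace ℂ (Fin k))]
      exact Subtype.ext (norm_eq_zero.mp h4)
    have hrange : LinearMap.range T = V₂ := by
      have hle : LinearMap.range T ≤ V₂ := by
        rintro _ ⟨v, rfl⟩
        exact ⟨(v : EuclideanSpace ℂ (Fin k)), rfl⟩
      refine Submodule.eq_of_le_of_finrank_eq hle ?_
      have h5 := LinearMap.finrank_range_add_finrank_ker T
      rw [hker, finrank_bot, add_zero] at h5
      rw [h5]
      have e1 : Module.finrank ℂ V₁ = P₁.rank := (rank_eq_finrank_range_ev P₁).symm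
      have e2 : Module.finrank ℂ V₂ = P₂.rank := (rank_eq_finrank_range_ev P₂).symm
      rw [e1, e2, hr]
    have hbound : ∀ u ∈ V₂, ‖ev (1 - P₁) u‖ ≤ c * ‖u‖ := by
      intro u hu
      obtain ⟨v, hv⟩ : ∃ v : V₁, T v = u := by rwa [← hrange] at hu
      set w : EuclideanSpace ℂ (Fin k) := (v : EuclideanSpace ℂ (Fin k)) with hw
      have hw1 : w ∈ V₁ := v.2
      have hPw : ev P₂ w = u := hv
      have fixu : ev P₂ u = u := range_fix i₂ u hu
      have e1 : ‖u‖ ^ 2 ≤ ‖ev P₁ u‖ * ‖w‖ := by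
        have hi1 : ⟪u, u⟫_ℂ = ⟪ev P₁ u, w⟫_ℂ := by
          have t1 : ⟪ev P₂ u, w⟫_ℂ = ⟪u, ev P₂ w⟫_ℂ := by rw [inner_ev, h₂]
          rw [fixu, hPw] at t1
          have s2 : ⟪ev P₁ u, w⟫_ℂ = ⟪u, ev P₁ w⟫_ℂ := by rw [inner_ev, h₁]
          rw [s2, range_fix i₁ w hw1]
          exact t1.symm
        calc ‖u‖ ^ 2 = RCLike.re ⟪u, u⟫_ℂ := (inner_self_eq_norm_sq (𝕜 := ℂ) u).symm
          _ = RCLike.re ⟪ev P₁ u, w⟫_ℂ := by rw [hi1]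
          _ ≤ ‖⟪ev P₁ u, w⟫_ℂ‖ := RCLike.re_le_norm _
          _ ≤ ‖ev P₁ u‖ * ‖w‖ := norm_inner_le_norm _ _
      have e2 : (1 - c ^ 2) * ‖w‖ ^ 2 ≤ ‖u‖ ^ 2 := by
        have p1 := proj_pyth h₂ i₂ w
        rw [hPw] at p1
        have p2 := key1 w hw1
        rw [hPw] at p2
        have p3 : ‖w - u‖ ^ 2 ≤ (c * ‖w‖) ^ 2 := pow_le_pow_left₀ (norm_nonneg _) p2 2
        rw [mul_pow] at p3
        nlinarith
      have e3 : ‖ev (1 - P₁) u‖ ^ 2 = ‖u‖ ^ 2 - ‖ev P₁ u‖ ^ 2 := by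
        have p1 := proj_pyth h₁ i₁ u
        have p2 : ev (1 - P₁) u = u - ev P₁ u := by rw [ev_sub, ev_one]
        rw [p2]; linarith
      refine sq_le_imp (norm_nonneg _) (mul_nonneg hc0 (norm_nonneg u)) ?_
      have h5 : 0 < 1 - c ^ 2 := by nlinarith
      have h6 : ‖u‖ ^ 2 * ‖u‖ ^ 2 ≤ (‖ev P₁ u‖ * ‖w‖) * (‖ev P₁ u‖ * ‖w‖) :=
        mul_le_mul e1 e1 (sq_nonneg ‖u‖) (mul_nonneg (norm_nonneg _) (norm_nonneg _))
      rcases eq_or_lt_of_le (norm_nonneg u) with hu0 | hu0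
      · rw [mul_pow]
        nlinarith [sq_nonneg ‖ev P₁ u‖]
      · rw [mul_pow]
        nlinarith [mul_le_mul_of_nonneg_left e2 (sq_nonneg ‖ev P₁ u‖),
          mul_le_mul_of_nonneg_left h6 (le_of_lt h5), sq_nonneg ‖ev P₁ u‖,
          mul_pos hu0 hu0]
    refine sNorm_le_bound _ _ hc0 fun x => ?_
    rw [ev_mul]
    calc ‖ev (1 - P₁) (ev P₂ x)‖ ≤ c * ‖ev P₂ x‖ := hbound _ ⟨x, rfl⟩
      _ ≤ c * ‖x‖ := mul_le_mul_of_nonneg_left (proj_contract h₂ i₂ x) hc0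

end SinTheta

lemma quad_ineq {a b : ℝ} (ha : 0 ≤ a) (hb : 0 ≤ b) :
    (a + b) ^ 2 + a ^ 2 ≤ ((1 + Real.sqrt 5) / 2) ^ 2 * (a ^ 2 + b ^ 2) := by
  have hs : Real.sqrt 5 ^ 2 = 5 := Real.sq_sqrt (by norm_num)
  have hs0 : 0 ≤ Real.sqrt 5 := Real.sqrt_nonneg 5
  have hs2 : 2 ≤ Real.sqrt 5 := by nlinarith
  have hs1 : 0 < Real.sqrt 5 - 1 := by linarith
  have h1 : 0 ≤ ((Real.sqrt 5 - 1) * a - 2 * b) ^ 2 := sq_nonneg _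
  have h2 : (Real.sqrt 5 - 1) * ((Real.sqrt 5 - 1) * a ^ 2 + (Real.sqrt 5 + 1) * b ^ 2
      - 4 * (a * b)) = ((Real.sqrt 5 - 1) * a - 2 * b) ^ 2 := by
    linear_combination b ^ 2 * hs
  have key : 0 ≤ (Real.sqrt 5 - 1) * a ^ 2 + (Real.sqrt 5 + 1) * b ^ 2 - 4 * (a * b) := by
    nlinarith [h1, h2, hs1]
  nlinarith [key, hs]

end WedinAux

open scoped Matrix.Norms.L2Operator InnerProductSpace
open WedinAux Matrix

set_option maxHeartbeats 2000000 in
theorem stmt10 (m n : ℕ) (A E : Matrix (Fin m) (Fin n) ℂ)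
    (P Q : Matrix (Fin n) (Fin m) ℂ)
    (hP : IsMoorePenrose A P) (hQ : IsMoorePenrose (A + E) Q)
    (hrank : (A + E).rank = A.rank) :
    sNorm (Q - P) ≤ (1 + Real.sqrt 5) / 2 * sNorm Q * sNorm P * sNorm E := by
  obtain ⟨hP1, hP2, hP3, hP4⟩ := hP
  obtain ⟨hQ1, hQ2, hQ3, hQ4⟩ := hQ
  set B := A + E with hB
  have hA : A = B - E := by rw [hB]; abel
  simp only [sNorm_eq_norm]
  -- idempotents
  have hPi₁i : (A * P) * (A * P) = A * P := by rw [← Matrix.mul_assoc, hP1]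
  have hPi₂i : (B * Q) * (B * Q) = B * Q := by rw [← Matrix.mul_assoc, hQ1]
  have hSg₁i : (P * A) * (P * A) = P * A := by rw [← Matrix.mul_assoc, hP2]
  have hSg₂i : (Q * B) * (Q * B) = Q * B := by rw [← Matrix.mul_assoc, hQ2]
  have hA' : A * (P * A) = A := by rw [← Matrix.mul_assoc, hP1]
  have hB' : B * (Q * B) = B := by rw [← Matrix.mul_assoc, hQ1]
  -- hermitian complements
  have hPi₁h' : (1 - A * P)ᴴ = 1 - A * P := by rw [conjTranspose_sub, conjTranspose_one, hP3]
  have hPi₂h' : (1 - B * Q)ᴴ = 1 - B * Q := by rw [conjTranspose_sub, conjTranspose_one, hQ3]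
  have hSg₁h' : (1 - P * A)ᴴ = 1 - P * A := by rw [conjTranspose_sub, conjTranspose_one, hP4]
  have hSg₂h' : (1 - Q * B)ᴴ = 1 - Q * B := by rw [conjTranspose_sub, conjTranspose_one, hQ4]
  have iPi₂' : (1 - B * Q) * (1 - B * Q) = 1 - B * Q := by simp [Matrix.sub_mul, Matrix.mul_sub, hPi₂i]
  have iSg₁' : (1 - P * A) * (1 - P * A) = 1 - P * A := by simp [Matrix.sub_mul, Matrix.mul_sub, hSg₁i]
  -- ranks
  have rPA : (P * A).rank = A.rank := by
    refine le_antisymm (Matrix.rank_mul_le_right P A) ?_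
    calc A.rank = (A * (P * A)).rank := by rw [hA']
      _ ≤ (P * A).rank := Matrix.rank_mul_le_right _ _
  have rAP : (A * P).rank = A.rank := by
    refine le_antisymm (Matrix.rank_mul_le_left A P) ?_
    calc A.rank = ((A * P) * A).rank := by rw [hP1]
      _ ≤ (A * P).rank := Matrix.rank_mul_le_left _ _
  have rQB : (Q * B).rank = B.rank := by
    refine le_antisymm (Matrix.rank_mul_le_right Q B) ?_
    calc B.rank = (B * (Q * B)).rank := by rw [hB']
      _ ≤ (Q * B).rank := Matrix.rank_mul_le_right _ _
  have rBQ : (B * Q).rank = B.rank := by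
    refine le_antisymm (Matrix.rank_mul_le_left B Q) ?_
    calc B.rank = ((B * Q) * B).rank := by rw [hQ1]
      _ ≤ (B * Q).rank := Matrix.rank_mul_le_left _ _
  -- n-side bound : ‖(1 - Q*B) * P‖ ≤ ‖E‖ * ‖Q‖ * ‖P‖
  have hAh : (P * A) * Aᴴ = Aᴴ := by
    calc (P * A) * Aᴴ = (P * A)ᴴ * Aᴴ := by rw [hP4]
      _ = (A * (P * A))ᴴ := by rw [← Matrix.conjTranspose_mul]
      _ = Aᴴ := by rw [hA']
  have zSg : (1 - P * A) * Aᴴ = 0 := by rw [Matrix.sub_mul, Matrix.one_mul, hAh, sub_self]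
  have hQB : Q * B = Bᴴ * Qᴴ := by rw [← hQ4, Matrix.conjTranspose_mul]
  have idn : (1 - P * A) * (Q * B) = (1 - P * A) * (Eᴴ * Qᴴ) := by
    calc (1 - P * A) * (Q * B) = (1 - P * A) * ((Aᴴ + Eᴴ) * Qᴴ) := by
          rw [hQB, hB, conjTranspose_add]
      _ = (1 - P * A) * (Aᴴ * Qᴴ) + (1 - P * A) * (Eᴴ * Qᴴ) := by
          rw [Matrix.add_mul, Matrix.mul_add]
      _ = (1 - P * A) * (Eᴴ * Qᴴ) := by
          rw [← Matrix.mul_assoc, zSg, Matrix.zero_mul, zero_add]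
  have nb1 : ‖(1 - P * A) * (Q * B)‖ ≤ ‖E‖ * ‖Q‖ := by
    rw [idn]
    calc ‖(1 - P * A) * (Eᴴ * Qᴴ)‖ ≤ ‖Eᴴ * Qᴴ‖ := norm_proj_mul_le hSg₁h' iSg₁' _
      _ ≤ ‖Eᴴ‖ * ‖Qᴴ‖ := Matrix.l2_opNorm_mul _ _
      _ = ‖E‖ * ‖Q‖ := by rw [Matrix.l2_opNorm_conjTranspose, Matrix.l2_opNorm_conjTranspose]
  have nsym : ‖(1 - Q * B) * (P * A)‖ ≤ ‖E‖ * ‖Q‖ := by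
    refine le_trans (sin_theta hQ4 hSg₂i hP4 hSg₁i ?_) nb1
    rw [rQB, rPA, hrank]
  have nQBP : ‖(1 - Q * B) * P‖ ≤ ‖E‖ * ‖Q‖ * ‖P‖ := by
    have hid : (1 - Q * B) * P = ((1 - Q * B) * (P * A)) * P := by
      rw [Matrix.mul_assoc, hP2]
    rw [hid]
    calc ‖((1 - Q * B) * (P * A)) * P‖ ≤ ‖(1 - Q * B) * (P * A)‖ * ‖P‖ :=
          Matrix.l2_opNorm_mul _ _
      _ ≤ ‖E‖ * ‖Q‖ * ‖P‖ := mul_le_mul_of_nonneg_right nsym (norm_nonneg _)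
  -- m-side bound : ‖Q * (1 - A*P)‖ ≤ ‖Q‖ * (‖E‖ * ‖P‖)
  have zPi : (1 - B * Q) * B = 0 := by rw [Matrix.sub_mul, Matrix.one_mul, hQ1, sub_self]
  have idm : (1 - B * Q) * (A * P) = -((1 - B * Q) * (E * P)) := by
    calc (1 - B * Q) * (A * P) = (1 - B * Q) * ((B - E) * P) := by rw [← hA]
      _ = (1 - B * Q) * (B * P) - (1 - B * Q) * (E * P) := by
          rw [Matrix.sub_mul B E P, Matrix.mul_sub]
      _ = -((1 - B * Q) * (E * P)) := by
          rw [← Matrix.mul_assoc, zPi, Matrix.zero_mul, zero_sub]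
  have mb1 : ‖(1 - B * Q) * (A * P)‖ ≤ ‖E‖ * ‖P‖ := by
    rw [idm, norm_neg]
    calc ‖(1 - B * Q) * (E * P)‖ ≤ ‖E * P‖ := norm_proj_mul_le hPi₂h' iPi₂' _
      _ ≤ ‖E‖ * ‖P‖ := Matrix.l2_opNorm_mul _ _
  have msym : ‖(1 - A * P) * (B * Q)‖ ≤ ‖E‖ * ‖P‖ := by
    refine le_trans (sin_theta hP3 hPi₁i hQ3 hPi₂i ?_) mb1
    rw [rAP, rBQ, hrank]
  have hswap : ‖(B * Q) * (1 - A * P)‖ = ‖(1 - A * P) * (B * Q)‖ := by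
    have e : ((1 - A * P) * (B * Q))ᴴ = (B * Q) * (1 - A * P) := by
      rw [Matrix.conjTranspose_mul, hQ3, hPi₁h']
    rw [← e, Matrix.l2_opNorm_conjTranspose]
  have hQQ : Q * (B * Q) = Q := by rw [← Matrix.mul_assoc, hQ2]
  have mQ1 : ‖Q * (1 - A * P)‖ ≤ ‖Q‖ * (‖E‖ * ‖P‖) := by
    have e : Q * (1 - A * P) = Q * ((B * Q) * (1 - A * P)) := by
      rw [← Matrix.mul_assoc, hQQ]
    rw [e]
    calc ‖Q * ((B * Q) * (1 - A * P))‖ ≤ ‖Q‖ * ‖(B * Q) * (1 - A * P)‖ :=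
          Matrix.l2_opNorm_mul _ _
      _ ≤ ‖Q‖ * (‖E‖ * ‖P‖) := by
          rw [hswap]
          exact mul_le_mul_of_nonneg_left msym (norm_nonneg _)
  have mQE : ‖Q * (E * P)‖ ≤ ‖Q‖ * (‖E‖ * ‖P‖) := by
    calc ‖Q * (E * P)‖ ≤ ‖Q‖ * ‖E * P‖ := Matrix.l2_opNorm_mul _ _
      _ ≤ ‖Q‖ * (‖E‖ * ‖P‖) :=
          mul_le_mul_of_nonneg_left (Matrix.l2_opNorm_mul _ _) (norm_nonneg _)
  -- abbreviation
  set η : ℝ := ‖Q‖ * (‖E‖ * ‖P‖) with hη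
  have hη0 : 0 ≤ η := mul_nonneg (norm_nonneg _) (mul_nonneg (norm_nonneg _) (norm_nonneg _))
  have nQBP' : ‖(1 - Q * B) * P‖ ≤ η := nQBP.trans_eq (by rw [hη]; ring)
  set φ : ℝ := (1 + Real.sqrt 5) / 2 with hφ
  have hφ0 : 0 ≤ φ := by positivity
  -- pointwise bound
  have main : ∀ x : EuclideanSpace ℂ (Fin m), ‖ev (Q - P) x‖ ≤ (φ * η) * ‖x‖ := by
    intro x
    set x₁ : EuclideanSpace ℂ (Fin m) := ev (A * P) x with hx₁
    set x₂ : EuclideanSpace ℂ (Fin m) := x - x₁ with hx₂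
    have hxsum : x = x₁ + x₂ := by rw [hx₂]; abel
    have hx₂' : x₂ = ev (1 - A * P) x := by rw [ev_sub, ev_one, hx₂, hx₁]
    have hpyth : ‖x‖ ^ 2 = ‖x₁‖ ^ 2 + ‖x₂‖ ^ 2 := proj_pyth hP3 hPi₁i x
    set Ta : EuclideanSpace ℂ (Fin n) := ev (Q * (1 - A * P)) x - ev (Q * (E * P)) x with hTa
    set Tb : EuclideanSpace ℂ (Fin n) := ev ((1 - Q * B) * P) x with hTb
    have hdec : ev (Q - P) x = Ta - Tb := by
      have midt : Q - P = Q * (1 - A * P) - Q * (E * P) - (1 - Q * B) * P := by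
        have hsplit : (Q * B) * P = Q * (A * P) + Q * (E * P) := by
          rw [Matrix.mul_assoc, hB, Matrix.add_mul, Matrix.mul_add]
        rw [Matrix.mul_sub, Matrix.mul_one, Matrix.sub_mul, Matrix.one_mul, hsplit]
        abel
      rw [midt, ev_sub, ev_sub, hTa, hTb]
    -- vanishing on complementary parts
    have killP : P * (1 - A * P) = 0 := by
      rw [Matrix.mul_sub, Matrix.mul_one, ← Matrix.mul_assoc, hP2, sub_self]
    have evx₁ : ∀ M : Matrix (Fin n) (Fin m) ℂ, M * (1 - A * P) = 0 → ev M x = ev M x₁ := by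
      intro M hM
      have : ev M x₂ = 0 := by rw [hx₂', ← ev_mul, hM, ev_zero]
      rw [hxsum, ev_add_arg, this, add_zero]
    have evx₂ : ∀ M : Matrix (Fin n) (Fin m) ℂ, M * (A * P) = 0 → ev M x = ev M x₂ := by
      intro M hM
      have : ev M x₁ = 0 := by rw [hx₁, ← ev_mul, hM, ev_zero]
      rw [hxsum, ev_add_arg, this, zero_add]
    -- norm bounds on the three terms
    have t1 : ‖ev (Q * (1 - A * P)) x‖ ≤ η * ‖x₂‖ := by
      have hM : (Q * (1 - A * P)) * (A * P) = 0 := by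
        rw [Matrix.mul_assoc, Matrix.sub_mul, Matrix.one_mul, hPi₁i, sub_self, Matrix.mul_zero]
      rw [evx₂ _ hM]
      calc ‖ev (Q * (1 - A * P)) x₂‖ ≤ ‖Q * (1 - A * P)‖ * ‖x₂‖ := norm_ev_le _ _
        _ ≤ η * ‖x₂‖ := mul_le_mul_of_nonneg_right (mQ1.trans_eq hη.symm) (norm_nonneg _)
    have t2 : ‖ev (Q * (E * P)) x‖ ≤ η * ‖x₁‖ := by
      have hM : (Q * (E * P)) * (1 - A * P) = 0 := by
        rw [Matrix.mul_assoc, Matrix.mul_assoc, killP, Matrix.mul_zero, Matrix.mul_zero]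
      rw [evx₁ _ hM]
      calc ‖ev (Q * (E * P)) x₁‖ ≤ ‖Q * (E * P)‖ * ‖x₁‖ := norm_ev_le _ _
        _ ≤ η * ‖x₁‖ := mul_le_mul_of_nonneg_right (mQE.trans_eq hη.symm) (norm_nonneg _)
    have t3 : ‖Tb‖ ≤ η * ‖x₁‖ := by
      have hM : ((1 - Q * B) * P) * (1 - A * P) = 0 := by
        rw [Matrix.mul_assoc, killP, Matrix.mul_zero]
      rw [hTb, evx₁ _ hM]
      calc ‖ev ((1 - Q * B) * P) x₁‖ ≤ ‖(1 - Q * B) * P‖ * ‖x₁‖ := norm_ev_le _ _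
        _ ≤ η * ‖x₁‖ := mul_le_mul_of_nonneg_right nQBP' (norm_nonneg _)
    have tTa : ‖Ta‖ ≤ η * ‖x₂‖ + η * ‖x₁‖ := by
      rw [hTa]
      exact (norm_sub_le _ _).trans (add_le_add t1 t2)
    -- orthogonality
    have hfix : ev (Q * B) Ta = Ta := by
      have f1 : (Q * B) * (Q * (1 - A * P)) = Q * (1 - A * P) := by
        rw [← Matrix.mul_assoc, hQ2]
      have f2 : (Q * B) * (Q * (E * P)) = Q * (E * P) := by
        rw [← Matrix.mul_assoc, hQ2]
      rw [hTa, ev_sub_arg, ← ev_mul, ← ev_mul, f1, f2]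
    have hkill : ev (Q * B) Tb = 0 := by
      have f3 : (Q * B) * ((1 - Q * B) * P) = 0 := by
        rw [← Matrix.mul_assoc, Matrix.mul_sub, Matrix.mul_one, hSg₂i, sub_self, Matrix.zero_mul]
      rw [hTb, ← ev_mul, f3, ev_zero]
    have horth : ⟪Ta, Tb⟫_ℂ = 0 := by
      calc ⟪Ta, Tb⟫_ℂ = ⟪ev (Q * B) Ta, Tb⟫_ℂ := by rw [hfix]
        _ = ⟪Ta, ev (Q * B)ᴴ Tb⟫_ℂ := inner_ev _ _ _
        _ = ⟪Ta, ev (Q * B) Tb⟫_ℂ := by rw [hQ4]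
        _ = 0 := by rw [hkill, inner_zero_right]
    have hsq : ‖ev (Q - P) x‖ ^ 2 = ‖Ta‖ ^ 2 + ‖Tb‖ ^ 2 := by
      rw [hdec]
      have := norm_sub_sq (𝕜 := ℂ) Ta Tb
      rw [horth] at this
      simpa using this
    -- combine
    refine sq_le_imp (norm_nonneg _)
      (mul_nonneg (mul_nonneg hφ0 hη0) (norm_nonneg _)) ?_
    have hq := quad_ineq (mul_nonneg hη0 (norm_nonneg x₁)) (mul_nonneg hη0 (norm_nonneg x₂))
    have hTa2 : ‖Ta‖ ^ 2 ≤ (η * ‖x₁‖ + η * ‖x₂‖) ^ 2 := by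
      have h := tTa
      nlinarith [norm_nonneg Ta, norm_nonneg x₁, norm_nonneg x₂, hη0]
    have hTb2 : ‖Tb‖ ^ 2 ≤ (η * ‖x₁‖) ^ 2 := by
      nlinarith [norm_nonneg Tb, norm_nonneg x₁, hη0, t3]
    have hrhs : φ ^ 2 * ((η * ‖x₁‖) ^ 2 + (η * ‖x₂‖) ^ 2) = ((φ * η) * ‖x‖) ^ 2 := by
      have h9 : ((φ * η) * ‖x‖) ^ 2 = φ ^ 2 * η ^ 2 * ‖x‖ ^ 2 := by ring
      rw [h9, hpyth]; ring
    rw [hsq, ← hrhs]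
    calc ‖Ta‖ ^ 2 + ‖Tb‖ ^ 2 ≤ (η * ‖x₁‖ + η * ‖x₂‖) ^ 2 + (η * ‖x₁‖) ^ 2 :=
          add_le_add hTa2 hTb2
      _ ≤ φ ^ 2 * ((η * ‖x₁‖) ^ 2 + (η * ‖x₂‖) ^ 2) := hq
  have := sNorm_le_bound (Q - P) ((φ * η)) (mul_nonneg hφ0 hη0) main
  calc ‖Q - P‖ ≤ φ * η := this
    _ = (1 + Real.sqrt 5) / 2 * ‖Q‖ * ‖P‖ * ‖E‖ := by rw [hφ, hη]; ring
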